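/- Let h^{jk} be symmetric positive definite with ∑ h^{jk} ξ_j ξ_k ≥ h₀|ξ|², let λ > 0, α ∈ (0,1), μ₀ ≥ 4, ℓ_{x_j} = λ d_{x_j}, ℓ_tt = ℓ_ss = −2λα, Ψ = −λ∑(h^{jk}d_{x_j})_{x_k} + 2λ(1−α), and suppose the coercivity Condition 2.1(i) holds with constant μ₀. Define c^{jk} = ∑_{j',k'}[2h^{jk'}(h^{j'k}ℓ_{x_{j'}})_{x_{k'}} − (h^{jk}h^{j'k'}ℓ_{x_{j'}})_{x_{k'}}] + h^{jk}(ℓ_tt + ℓ_ss − Ψ). Then 2∑_{j,k} c^{jk} v_{x_j} v_{x_k} ≥ (2μ₀ − 8α − 4(1−α))λ ∑_{j,k} h^{jk} v_{x_j} v_{x_k} ≥ 4λ(1−α) h₀ |∇v|², for any vector (v_{x_1},...,v_{x_n}) ∈ ℝⁿ. -/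

import Mathlib

open scoped BigOperators

/-- Partial derivative in the `j`-th coordinate direction. -/
noncomputable def pd {n : ℕ} (j : Fin n) (f : (Fin n → ℝ) → ℝ) (x : Fin n → ℝ) : ℝ :=
  fderiv ℝ f x (Pi.single j 1)

/-- The pseudoconvexity quantity of Condition 2.1(i). -/
noncomputable def coercQ {n : ℕ} (h : Fin n → Fin n → (Fin n → ℝ) → ℝ)
    (d : (Fin n → ℝ) → ℝ) (x : Fin n → ℝ) (ξ : Fin n → ℝ) : ℝ :=
  ∑ j, ∑ k, (∑ j', ∑ k',
    (2 * h j k' x * pd k' (fun y => h j' k y * pd j' d y) x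
      - pd k' (h j k) x * (h j' k' x * pd j' d x))) * ξ j * ξ k


lemma pd_mul {n : ℕ} (k : Fin n) {f g : (Fin n → ℝ) → ℝ} {x : Fin n → ℝ}
    (hf : DifferentiableAt ℝ f x) (hg : DifferentiableAt ℝ g x) :
    pd k (fun y => f y * g y) x = pd k f x * g x + f x * pd k g x := by
  unfold pd
  rw [fderiv_fun_mul hf hg]
  simp [smul_eq_mul]
  ring

lemma pd_const_mul {n : ℕ} (k : Fin n) (c : ℝ) {f : (Fin n → ℝ) → ℝ} {x : Fin n → ℝ}
    (hf : DifferentiableAt ℝ f x) :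
    pd k (fun y => c * f y) x = c * pd k f x := by
  unfold pd
  rw [fderiv_const_mul hf c]
  simp

lemma pd_diffAt {n : ℕ} {d : (Fin n → ℝ) → ℝ} (hd : ContDiff ℝ 2 d) (j' : Fin n)
    (x : Fin n → ℝ) : DifferentiableAt ℝ (fun y => pd j' d y) x := by
  have h1 : ContDiff ℝ 1 (fun y => fderiv ℝ d y (Pi.single j' 1)) :=
    (hd.fderiv_right (by norm_num)).clm_apply contDiff_const
  exact (h1.differentiable one_ne_zero).differentiableAt

/-- Estimate (4.15): with `ℓ_{x_j} = λ d_{x_j}`, `ℓ_tt = ℓ_ss = −2λα`,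
`Ψ = −λ∑(h^{jk}d_{x_j})_{x_k} + 2λ(1−α)`, and `c^{jk}` as in (3.2),
`2∑ c^{jk} v_{x_j} v_{x_k} ≥ (2μ₀ − 8α − 4(1−α)) λ ∑ h^{jk} v_{x_j} v_{x_k}
≥ 4λ(1−α) h₀ |∇v|²`. -/
theorem stmt_14 {n : ℕ} (h : Fin n → Fin n → (Fin n → ℝ) → ℝ)
    (hh : ∀ j k, ContDiff ℝ 2 (h j k)) (hsym : ∀ j k x, h j k x = h k j x)
    (d : (Fin n → ℝ) → ℝ) (hd : ContDiff ℝ 2 d)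
    (Ω : Set (Fin n → ℝ)) (h₀ μ₀ lam α : ℝ)
    (hh₀ : 0 < h₀) (hμ : 4 ≤ μ₀) (hlam : 0 < lam) (hα0 : 0 < α) (hα1 : α < 1)
    (hpos : ∀ x, ∀ ξ : Fin n → ℝ, h₀ * ∑ i, (ξ i) ^ 2 ≤ ∑ j, ∑ k, h j k x * ξ j * ξ k)
    (hco : ∀ x ∈ Ω, ∀ ξ : Fin n → ℝ,
      μ₀ * ∑ j, ∑ k, h j k x * ξ j * ξ k ≤ coercQ h d x ξ) :
    ∀ x ∈ Ω, ∀ v : Fin n → ℝ,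
      let Ψ : ℝ := -lam * ∑ j, ∑ k, pd k (fun y => h j k y * pd j d y) x
        + 2 * lam * (1 - α)
      let c : Fin n → Fin n → ℝ := fun j k =>
        (∑ j', ∑ k', (2 * h j k' x * pd k' (fun y => h j' k y * (lam * pd j' d y)) x
            - pd k' (fun y => h j k y * h j' k' y * (lam * pd j' d y)) x))
          + h j k x * ((-2 * lam * α) + (-2 * lam * α) - Ψ)
      ((2 * μ₀ - 8 * α - 4 * (1 - α)) * lam * ∑ j, ∑ k, h j k x * v j * v k
          ≤ 2 * ∑ j, ∑ k, c j k * v j * v k) ∧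
      (4 * lam * (1 - α) * h₀ * ∑ i, (v i) ^ 2
          ≤ (2 * μ₀ - 8 * α - 4 * (1 - α)) * lam * ∑ j, ∑ k, h j k x * v j * v k) := by
  intro x hx v
  dsimp only
  have hdiff : ∀ j k : Fin n, DifferentiableAt ℝ (h j k) x :=
    fun j k => ((hh j k).differentiable (by norm_num)).differentiableAt
  have hpdd : ∀ j' : Fin n, DifferentiableAt ℝ (fun y => pd j' d y) x :=
    fun j' => pd_diffAt hd j' x
  have hterm : ∀ j k j' k' : Fin n,
      2 * h j k' x * pd k' (fun y => h j' k y * (lam * pd j' d y)) x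
        - pd k' (fun y => h j k y * h j' k' y * (lam * pd j' d y)) x
      = lam * (2 * h j k' x * pd k' (fun y => h j' k y * pd j' d y) x
          - pd k' (h j k) x * (h j' k' x * pd j' d x))
        - lam * (h j k x * pd k' (fun y => h j' k' y * pd j' d y) x) := by
    intro j k j' k'
    have e1 : pd k' (fun y => h j' k y * (lam * pd j' d y)) x
        = lam * pd k' (fun y => h j' k y * pd j' d y) x := by
      have heq : (fun y => h j' k y * (lam * pd j' d y))
          = fun y => lam * (h j' k y * pd j' d y) := by
        funext y; ring
      rw [heq, pd_const_mul k' lam ((hdiff j' k).fun_mul (hpdd j'))]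
    have e2 : pd k' (fun y => h j k y * h j' k' y * (lam * pd j' d y)) x
        = lam * (pd k' (h j k) x * (h j' k' x * pd j' d x)
            + h j k x * pd k' (fun y => h j' k' y * pd j' d y) x) := by
      have heq : (fun y => h j k y * h j' k' y * (lam * pd j' d y))
          = fun y => lam * (h j k y * (h j' k' y * pd j' d y)) := by
        funext y; ring
      rw [heq, pd_const_mul k' lam ((hdiff j k).fun_mul ((hdiff j' k').fun_mul (hpdd j'))),
        pd_mul k' (hdiff j k) ((hdiff j' k').fun_mul (hpdd j'))]
    rw [e1, e2]
    ring
  have hceq : ∀ j k : Fin n,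
      ((∑ j', ∑ k', (2 * h j k' x * pd k' (fun y => h j' k y * (lam * pd j' d y)) x
          - pd k' (fun y => h j k y * h j' k' y * (lam * pd j' d y)) x))
        + h j k x * ((-2 * lam * α) + (-2 * lam * α)
          - (-lam * ∑ j'', ∑ k'', pd k'' (fun y => h j'' k'' y * pd j'' d y) x
              + 2 * lam * (1 - α))))
      = lam * (∑ j', ∑ k', (2 * h j k' x * pd k' (fun y => h j' k y * pd j' d y) x
            - pd k' (h j k) x * (h j' k' x * pd j' d x)))
        + lam * (-4 * α - 2 * (1 - α)) * h j k x := by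
    intro j k
    have hc : (∑ j', ∑ k', (2 * h j k' x * pd k' (fun y => h j' k y * (lam * pd j' d y)) x
          - pd k' (fun y => h j k y * h j' k' y * (lam * pd j' d y)) x))
        = lam * (∑ j', ∑ k', (2 * h j k' x * pd k' (fun y => h j' k y * pd j' d y) x
            - pd k' (h j k) x * (h j' k' x * pd j' d x)))
          - lam * h j k x * ∑ j', ∑ k', pd k' (fun y => h j' k' y * pd j' d y) x := by
      simp only [Finset.mul_sum]
      rw [← Finset.sum_sub_distrib]
      refine Finset.sum_congr rfl fun j' _ => ?_
      rw [← Finset.sum_sub_distrib]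
      refine Finset.sum_congr rfl fun k' _ => ?_
      rw [hterm j k j' k']
      ring
    rw [hc]
    ring
  have key : lam * coercQ h d x v
        + lam * (-4 * α - 2 * (1 - α)) * ∑ j, ∑ k, h j k x * v j * v k
      = ∑ j, ∑ k,
        ((∑ j', ∑ k', (2 * h j k' x * pd k' (fun y => h j' k y * (lam * pd j' d y)) x
            - pd k' (fun y => h j k y * h j' k' y * (lam * pd j' d y)) x))
          + h j k x * ((-2 * lam * α) + (-2 * lam * α)
            - (-lam * ∑ j'', ∑ k'', pd k'' (fun y => h j'' k'' y * pd j'' d y) x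
                + 2 * lam * (1 - α)))) * v j * v k := by
    unfold coercQ
    rw [Finset.mul_sum, Finset.mul_sum, ← Finset.sum_add_distrib]
    refine Finset.sum_congr rfl fun j _ => ?_
    rw [Finset.mul_sum, Finset.mul_sum, ← Finset.sum_add_distrib]
    refine Finset.sum_congr rfl fun k _ => ?_
    rw [hceq j k]
    ring
  refine ⟨?_, ?_⟩
  · rw [← key]
    have hQ := hco x hx v
    nlinarith [mul_nonneg hlam.le (sub_nonneg.2 hQ)]
  · have hP : (0:ℝ) ≤ ∑ i, (v i) ^ 2 :=
      Finset.sum_nonneg fun i _ => sq_nonneg _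
    have hH : h₀ * ∑ i, (v i) ^ 2 ≤ ∑ j, ∑ k, h j k x * v j * v k := hpos x v
    have hHnn : (0:ℝ) ≤ ∑ j, ∑ k, h j k x * v j * v k :=
      le_trans (mul_nonneg hh₀.le hP) hH
    nlinarith [mul_nonneg hlam.le hHnn,
      mul_nonneg (mul_nonneg hlam.le (by linarith : (0:ℝ) ≤ 1 - α))
        (by linarith : (0:ℝ) ≤ (∑ j, ∑ k, h j k x * v j * v k) - h₀ * ∑ i, (v i) ^ 2),
      mul_nonneg (sub_nonneg.2 hμ) (mul_nonneg hlam.le hHnn)]
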